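/- arXiv:1304.5285 — 2 statements merged into one kernel-verified Lean document; each statement's English description precedes it below -/
import Mathlib

section
/- Let d ≥ 1 and s ≥ 0 be integers and ω ∈ ℝ. For a Schwartz function σ(x,θ) on ℝ^{d+1}×ℝ define σ̃(x,θ₀,ξ_d) := σ(x, θ₀ + ω ξ_d). Then there exists a constant C = C(d,s), independent of σ and of ω, such that |σ̃|_{𝓔^s} ≤ C ‖σ‖_{H^{s+1}(ℝ^{d+2})}. -/
open MeasureTheory ENNReal

set_option maxHeartbeats 1000000

noncomputable section

variable {F : Type*} [NormedAddCommGroup F] [NormedSpace ℝ F]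

/-- Partial derivative in the `i`-th coordinate direction on `ℝⁿ`. -/
def pd {n : ℕ} (i : Fin n) (f : (Fin n → ℝ) → F) : (Fin n → ℝ) → F :=
  fun z => fderiv ℝ f z (Pi.single i 1)

/-- Iterated mixed partial derivative associated to a multi-index `α`. -/
def mderiv {n : ℕ} (α : Fin n → ℕ) (f : (Fin n → ℝ) → F) : (Fin n → ℝ) → F :=
  (List.finRange n).foldr (fun i g => (pd i)^[α i] g) f

/-- Multi-indices of total order at most `s`. -/
def mIdx (n s : ℕ) : Finset (Fin n → Fin (s + 1)) :=
  Finset.univ.filter (fun α => (∑ i, ((α i : ℕ))) ≤ s)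

/-- The `L²` norm (as an extended nonnegative real). -/
def L2N {n : ℕ} (f : (Fin n → ℝ) → F) : ℝ≥0∞ :=
  eLpNorm f 2 volume

/-- The Sobolev `H^s` norm: sum of `L²` norms of all partials of order `≤ s`. -/
def HsN {n : ℕ} (s : ℕ) (f : (Fin n → ℝ) → F) : ℝ≥0∞ :=
  ∑ α ∈ mIdx n s, L2N (mderiv (fun i => (α i : ℕ)) f)

/-- The weighted norm `Γ^s` on `ℝ^{d+1} × ℝ` (the variable `θ` is the last coordinate). -/
def GammaN (d s : ℕ) (a : (Fin (d + 2) → ℝ) → F) : ℝ≥0∞ :=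
  ∑ β₁ ∈ Finset.range (s + 1), ∑ β₂ ∈ mIdx (d + 1) s, ∑ β₃ ∈ Finset.range (s + 1),
    if β₁ + (∑ i, ((β₂ i : ℕ))) + β₃ ≤ s then
      L2N (fun z => (z (Fin.last (d + 1))) ^ β₁ •
        mderiv (Fin.snoc (fun i => ((β₂ i : ℕ))) β₃) a z)
    else 0

/-- The norm `Λ^s` on `ℝ^{d+1} × ℝ`. -/
def LambdaN (d s : ℕ) (a : (Fin (d + 2) → ℝ) → F) : ℝ≥0∞ :=
  (∑ β₁ ∈ Finset.range (s + 1), L2N (fun z => (z (Fin.last (d + 1))) ^ β₁ • a z))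
    + (∑ β₂ ∈ mIdx (d + 1) s, L2N (mderiv (Fin.snoc (fun i => ((β₂ i : ℕ))) 0) a))
    + (∑ β₃ ∈ Finset.range (s + 1), L2N ((pd (Fin.last (d + 1)))^[β₃] a))

/-- The norm `E^s`: functions of `(x_d, (x', θ₀))`. -/
def EsN {d : ℕ} (s : ℕ) (U : ℝ → (Fin (d + 1) → ℝ) → F) : ℝ≥0∞ :=
  (⨆ xd ∈ Set.Ici (0 : ℝ), HsN s (U xd)) +
    (∫⁻ xd in Set.Ici (0 : ℝ), (HsN (s + 1) (U xd)) ^ 2) ^ (1 / 2 : ℝ)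

/-- The norm `𝓔^s`: functions of `(ξ_d, x_d, (x', θ₀))`. -/
def CalEsN {d : ℕ} (s : ℕ) (W : ℝ → ℝ → (Fin (d + 1) → ℝ) → F) : ℝ≥0∞ :=
  ⨆ ξd ∈ Set.Ici (0 : ℝ), EsN s (W ξd)

/-- The point `(x', x_d, θ) ∈ ℝ^{d+2}` built from `w = (x', θ₀) ∈ ℝ^{d+1}`, `x_d` and `θ`. -/
def pt {d : ℕ} (w : Fin (d + 1) → ℝ) (xd θ : ℝ) : Fin (d + 2) → ℝ :=
  Fin.snoc (Fin.snoc (fun i : Fin d => w (Fin.castSucc i)) xd) θ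

/-- Moment-zero approximation: cut off the low `θ`-frequencies of `σ`. -/
def mz (φ : ℝ → ℝ) (p : ℝ) {d : ℕ} (σ : (Fin (d + 2) → ℝ) → ℂ) :
    (Fin (d + 2) → ℝ) → ℂ :=
  fun z => FourierTransformInv.fourierInv
    (fun m : ℝ => (1 - (φ (m / p) : ℂ)) *
      FourierTransform.fourier (fun θ : ℝ => σ (Function.update z (Fin.last (d + 1)) θ)) m)
    (z (Fin.last (d + 1)))

/-- The `θ`-primitive of the moment-zero approximation. -/
def primI (φ : ℝ → ℝ) (p : ℝ) {d : ℕ} (σ : (Fin (d + 2) → ℝ) → ℂ) :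
    (Fin (d + 2) → ℝ) → ℂ :=
  fun z => ∫ r in Set.Iic (z (Fin.last (d + 1))),
    mz φ p σ (Function.update z (Fin.last (d + 1)) r)



namespace PSA

open SchwartzMap

/-- directional derivative of a plain function -/
def vdF {n : ℕ} (v : Fin n → ℝ) (g : (Fin n → ℝ) → ℝ) : (Fin n → ℝ) → ℝ :=
  fun x => fderiv ℝ g x v

def vdListF {n : ℕ} (L : List (Fin n → ℝ)) (g : (Fin n → ℝ) → ℝ) : (Fin n → ℝ) → ℝ :=
  L.foldr vdF g

def vdS {n : ℕ} (v : Fin n → ℝ) (f : 𝓢((Fin n → ℝ), ℝ)) : 𝓢((Fin n → ℝ), ℝ) :=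
  LineDeriv.lineDerivOpCLM ℝ _ v f

def vdListS {n : ℕ} (L : List (Fin n → ℝ)) (f : 𝓢((Fin n → ℝ), ℝ)) : 𝓢((Fin n → ℝ), ℝ) :=
  L.foldr vdS f

lemma vdS_apply {n : ℕ} (v : Fin n → ℝ) (f : 𝓢((Fin n → ℝ), ℝ)) (x) :
    vdS v f x = fderiv ℝ f x v := lineDerivOp_apply_eq_fderiv ..

lemma coe_vdS {n : ℕ} (v : Fin n → ℝ) (f : 𝓢((Fin n → ℝ), ℝ)) :
    ⇑(vdS v f) = vdF v ⇑f := funext fun x => lineDerivOp_apply_eq_fderiv ..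

lemma coe_vdListS {n : ℕ} (L : List (Fin n → ℝ)) (f : 𝓢((Fin n → ℝ), ℝ)) :
    ⇑(vdListS L f) = vdListF L ⇑f := by
  induction L with
  | nil => rfl
  | cons v L ih =>
    show ⇑(vdS v (vdListS L f)) = vdF v (vdListF L ⇑f)
    rw [coe_vdS, ih]

lemma sch_differentiable {n : ℕ} (f : 𝓢((Fin n → ℝ), ℝ)) : Differentiable ℝ ⇑f :=
  (f.smooth 1).differentiable (by norm_num)

lemma sch_fderiv_differentiable {n : ℕ} (f : 𝓢((Fin n → ℝ), ℝ)) :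
    Differentiable ℝ (fderiv ℝ ⇑f) := by
  have h := f.smooth'
  rw [contDiff_infty_iff_fderiv] at h
  exact h.2.differentiable (by simp)

lemma vdS_comm {n : ℕ} (u v : Fin n → ℝ) (f : 𝓢((Fin n → ℝ), ℝ)) :
    vdS u (vdS v f) = vdS v (vdS u f) := by
  ext x
  have key : ∀ a b : Fin n → ℝ, vdS a (vdS b f) x = fderiv ℝ (fderiv ℝ ⇑f) x a b := by
    intro a b
    rw [vdS_apply]
    have h1 : ⇑(vdS b f) = fun y => fderiv ℝ ⇑f y b := funext fun y => vdS_apply ..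
    rw [h1, fderiv_clm_apply ((sch_fderiv_differentiable f) x) (differentiableAt_const b)]
    simp
  rw [key u v, key v u]
  exact second_derivative_symmetric (f := ⇑f)
    (fun y => ((sch_differentiable f) y).hasFDerivAt)
    (((sch_fderiv_differentiable f) x).hasFDerivAt) u v

lemma vdListS_perm {n : ℕ} {L₁ L₂ : List (Fin n → ℝ)} (h : L₁.Perm L₂)
    (f : 𝓢((Fin n → ℝ), ℝ)) : vdListS L₁ f = vdListS L₂ f :=
  h.foldr_eq' (fun x _ y _ z => vdS_comm y x z) f


def idxList {n : ℕ} (α : Fin n → ℕ) : List (Fin n) :=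
  (List.finRange n).flatMap fun i => List.replicate (α i) i

lemma vdListF_append {n : ℕ} (L₁ L₂ : List (Fin n → ℝ)) (g : (Fin n → ℝ) → ℝ) :
    vdListF (L₁ ++ L₂) g = vdListF L₁ (vdListF L₂ g) := List.foldr_append ..

lemma iterate_pd_eq {n : ℕ} (i : Fin n) (k : ℕ) (g : (Fin n → ℝ) → ℝ) :
    (pd i)^[k] g = vdListF (List.replicate k (Pi.single i 1)) g := by
  induction k with
  | zero => rfl
  | succ k ih =>
    rw [Function.iterate_succ_apply', ih, List.replicate_succ]
    rfl

lemma mderiv_eq_vdListF {n : ℕ} (α : Fin n → ℕ) (g : (Fin n → ℝ) → ℝ) :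
    mderiv α g = vdListF ((idxList α).map (fun i => Pi.single i 1)) g := by
  show (List.finRange n).foldr (fun i h => (pd i)^[α i] h) g = _
  rw [idxList]
  generalize List.finRange n = l
  induction l with
  | nil => rfl
  | cons a l ih =>
    rw [List.foldr_cons, ih, List.flatMap_cons, List.map_append, vdListF_append,
      iterate_pd_eq, List.map_replicate]

lemma count_idxList {n : ℕ} (β : Fin n → ℕ) (k : Fin n) : (idxList β).count k = β k := by
  rw [idxList]
  have h : ∀ l : List (Fin n), l.Nodup →
      ((l.flatMap fun i => List.replicate (β i) i).count k) = if k ∈ l then β k else 0 := by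
    intro l hl
    induction l with
    | nil => simp
    | cons a l ih =>
      rw [List.flatMap_cons, List.count_append, List.count_replicate, ih hl.of_cons]
      by_cases hk : k = a
      · subst hk
        simp [(List.nodup_cons.1 hl).1]
      · simp [hk, Ne.symm hk]
  rw [h _ (List.nodup_finRange n)]
  simp [List.mem_finRange]

lemma fin_succAbove_cases {n : ℕ} (p : Fin (n+1)) {P : Fin (n+1) → Prop}
    (h0 : P p) (hs : ∀ j, P (p.succAbove j)) (k : Fin (n+1)) : P k := by
  by_cases hk : k = p
  · exact hk ▸ h0
  · obtain ⟨j, rfl⟩ := Fin.exists_succAbove_eq hk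
    exact hs j

lemma idxList_perm_insert {n : ℕ} (p : Fin (n+1)) (α : Fin n → ℕ) :
    ((idxList α).map p.succAbove).Perm (idxList (p.insertNth (α := fun _ => ℕ) 0 α)) := by
  rw [List.perm_iff_count]
  refine fin_succAbove_cases p ?_ ?_
  · rw [List.count_eq_zero.2, count_idxList, Fin.insertNth_apply_same]
    intro hmem
    obtain ⟨j, _, hj⟩ := List.mem_map.1 hmem
    exact Fin.succAbove_ne p j hj
  · intro j
    rw [List.count_map_of_injective _ _ Fin.succAbove_right_injective, count_idxList,
      count_idxList, Fin.insertNth_apply_succAbove]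

lemma cons_idxList_perm {n : ℕ} (p : Fin (n+1)) (α : Fin n → ℕ) :
    (p :: idxList (p.insertNth (α := fun _ => ℕ) 0 α)).Perm
      (idxList (p.insertNth (α := fun _ => ℕ) 1 α)) := by
  rw [List.perm_iff_count]
  refine fin_succAbove_cases p ?_ ?_
  · rw [List.count_cons_self, count_idxList, count_idxList, Fin.insertNth_apply_same,
      Fin.insertNth_apply_same]
  · intro j
    rw [List.count_cons_of_ne (Fin.succAbove_ne p j).symm, count_idxList, count_idxList,
      Fin.insertNth_apply_succAbove, Fin.insertNth_apply_succAbove]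

lemma sum_insertNth {n : ℕ} (p : Fin (n+1)) (c : ℕ) (α : Fin n → ℕ) :
    ∑ k, p.insertNth (α := fun _ => ℕ) c α k = c + ∑ j, α j := by
  rw [Fin.sum_univ_succAbove _ p]
  simp


/-- chain rule along an affine map -/
lemma vdListF_comp_affine {m n : ℕ} (f : 𝓢((Fin n → ℝ), ℝ))
    (M : (Fin m → ℝ) →L[ℝ] (Fin n → ℝ)) (b : Fin n → ℝ) (L : List (Fin m → ℝ)) :
    vdListF L (fun w => f (M w + b)) = fun w => vdListS (L.map M) f (M w + b) := by
  induction L with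
  | nil => rfl
  | cons v L ih =>
    show vdF v (vdListF L fun w => f (M w + b)) = _
    rw [ih]
    funext w
    set g := vdListS (L.map M) f with hg
    have hA : ∀ u, HasFDerivAt (fun w : Fin m → ℝ => M w + b) M u :=
      fun u => (M.hasFDerivAt).add_const b
    have step : vdF v (fun w => g (M w + b)) w = fderiv ℝ g (M w + b) (M v) := by
      show fderiv ℝ ((⇑g) ∘ (fun w => M w + b)) w v = _
      rw [fderiv_comp w (sch_differentiable g _) (hA w).differentiableAt, (hA w).fderiv]
      rfl
    rw [step]
    show _ = vdListS (M v :: L.map M) f (M w + b)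
    show _ = vdS (M v) g (M w + b)
    rw [vdS_apply]

section Geometry
variable {d : ℕ}

/-- the slot index `d` inside `Fin (d+2)` -/
def ps (d : ℕ) : Fin (d+2) := Fin.castSucc (Fin.last d)

lemma succAbove_ps_last : (ps d).succAbove (Fin.last d) = Fin.last (d+1) := by
  rw [ps, Fin.succAbove_of_le_castSucc _ _ (le_refl _), Fin.succ_last]

lemma succAbove_ps_cast (i : Fin d) :
    (ps d).succAbove (Fin.castSucc i) = Fin.castSucc (Fin.castSucc i) := by
  rw [ps, Fin.succAbove_of_castSucc_lt]
  exact (Fin.castSucc_lt_castSucc_iff).2 (Fin.castSucc_lt_last i)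

def insLM (d : ℕ) : ((Fin (d+1)) → ℝ) →ₗ[ℝ] ((Fin (d+2)) → ℝ) where
  toFun w := (ps d).insertNth (α := fun _ => ℝ) 0 w
  map_add' w v := by
    refine funext (fin_succAbove_cases (ps d) ?_ (fun j => ?_))
    · simp [Fin.insertNth_apply_same]
    · simp [Fin.insertNth_apply_succAbove]
  map_smul' c w := by
    refine funext (fin_succAbove_cases (ps d) ?_ (fun j => ?_))
    · simp [Fin.insertNth_apply_same]
    · simp [Fin.insertNth_apply_succAbove]

def insL (d : ℕ) : ((Fin (d+1)) → ℝ) →L[ℝ] ((Fin (d+2)) → ℝ) :=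
  LinearMap.toContinuousLinearMap (insLM d)

lemma insL_apply (w : Fin (d+1) → ℝ) : insL d w = (ps d).insertNth (α := fun _ => ℝ) 0 w := rfl

lemma insertNth_eq_insL_add (xd : ℝ) (w : Fin (d+1) → ℝ) :
    (ps d).insertNth (α := fun _ => ℝ) xd w
      = insL d w + xd • (Pi.single (ps d) 1 : Fin (d+2) → ℝ) := by
  refine funext (fin_succAbove_cases (ps d) ?_ (fun j => ?_))
  · simp [insL_apply, Fin.insertNth_apply_same]
  · simp [insL_apply, Fin.insertNth_apply_succAbove,
      Pi.single_eq_of_ne (Fin.succAbove_ne (ps d) j)]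

lemma insL_single (j : Fin (d+1)) :
    insL d (Pi.single j 1) = (Pi.single ((ps d).succAbove j) 1 : Fin (d+2) → ℝ) := by
  refine funext (fin_succAbove_cases (ps d) ?_ (fun j' => ?_))
  · rw [insL_apply, Fin.insertNth_apply_same,
      Pi.single_eq_of_ne (Ne.symm (Fin.succAbove_ne (ps d) j))]
  · rw [insL_apply, Fin.insertNth_apply_succAbove]
    by_cases hj : j' = j
    · subst hj; simp
    · rw [Pi.single_eq_of_ne hj, Pi.single_eq_of_ne]
      exact fun hc => hj (Fin.succAbove_right_injective hc)

lemma pt_eq (w : Fin (d+1) → ℝ) (xd θ : ℝ) :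
    pt w xd θ = (ps d).insertNth (α := fun _ => ℝ) xd (Function.update w (Fin.last d) θ) := by
  refine funext (fin_succAbove_cases (ps d) ?_ (fun j => ?_))
  · rw [Fin.insertNth_apply_same]
    simp only [pt, ps, Fin.snoc_castSucc, Fin.snoc_last]
  · rw [Fin.insertNth_apply_succAbove]
    induction j using Fin.lastCases with
    | last =>
      rw [succAbove_ps_last]
      simp only [pt, Fin.snoc_last, Function.update_self]
    | cast i =>
      rw [succAbove_ps_cast]
      simp only [pt, Fin.snoc_castSucc]
      rw [Function.update_of_ne (Fin.castSucc_lt_last i).ne]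

lemma update_last_add (w : Fin (d+1) → ℝ) (c : ℝ) :
    Function.update w (Fin.last d) (w (Fin.last d) + c)
      = w + c • (Pi.single (Fin.last d) 1 : Fin (d+1) → ℝ) := by
  funext j
  by_cases hj : j = Fin.last d
  · subst hj; simp
  · rw [Function.update_of_ne hj]
    simp [Pi.single_eq_of_ne hj]

end Geometry

end PSA


namespace PSA
open SchwartzMap

section Part4
variable {d : ℕ}

/-- The Schwartz function representing `∂^α` of the sliced profile. -/
def GS (σ : 𝓢((Fin (d+2) → ℝ), ℝ)) (α : Fin (d+1) → ℕ) : 𝓢((Fin (d+2) → ℝ), ℝ) :=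
  vdListS ((idxList α).map (fun j => Pi.single ((ps d).succAbove j) 1)) σ

lemma coe_GS (σ : 𝓢((Fin (d+2) → ℝ), ℝ)) (α : Fin (d+1) → ℕ) :
    ⇑(GS σ α) = mderiv ((ps d).insertNth (α := fun _ => ℕ) 0 α) ⇑σ := by
  have hperm : ((idxList α).map (fun j => (Pi.single ((ps d).succAbove j) 1 : Fin (d+2) → ℝ))).Perm
      ((idxList ((ps d).insertNth (α := fun _ => ℕ) 0 α)).map
        (fun i => (Pi.single i 1 : Fin (d+2) → ℝ))) := by
    have h := (idxList_perm_insert (ps d) α).map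
      (fun i : Fin (d+2) => (Pi.single i 1 : Fin (d+2) → ℝ))
    rw [List.map_map] at h
    exact h
  rw [mderiv_eq_vdListF, ← coe_vdListS]
  exact congrArg _ (vdListS_perm hperm σ)

lemma coe_vdS_GS (σ : 𝓢((Fin (d+2) → ℝ), ℝ)) (α : Fin (d+1) → ℕ) :
    ⇑(vdS (Pi.single (ps d) 1) (GS σ α))
      = mderiv ((ps d).insertNth (α := fun _ => ℕ) 1 α) ⇑σ := by
  have h1 : vdS (Pi.single (ps d) 1) (GS σ α)
      = vdListS ((ps d :: (idxList α).map (ps d).succAbove).map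
          (fun i => (Pi.single i 1 : Fin (d+2) → ℝ))) σ := by
    show vdS _ (vdListS _ σ) = _
    rw [List.map_cons, List.map_map]
    rfl
  have hperm : ((ps d :: (idxList α).map (ps d).succAbove).map
        (fun i => (Pi.single i 1 : Fin (d+2) → ℝ))).Perm
      ((idxList ((ps d).insertNth (α := fun _ => ℕ) 1 α)).map
        (fun i => (Pi.single i 1 : Fin (d+2) → ℝ))) := by
    refine List.Perm.map _ ?_
    exact ((idxList_perm_insert (ps d) α).cons (ps d)).trans (cons_idxList_perm (ps d) α)
  rw [h1, vdListS_perm hperm σ, mderiv_eq_vdListF, ← coe_vdListS]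

/-- the full slice/translation identity for mixed derivatives -/
lemma slice_mderiv (σ : 𝓢((Fin (d+2) → ℝ), ℝ)) (α : Fin (d+1) → ℕ) (xd c : ℝ) :
    mderiv α (fun w => σ (pt w xd (w (Fin.last d) + c)))
      = fun w => (GS σ α) ((ps d).insertNth (α := fun _ => ℝ) xd
          (w + c • (Pi.single (Fin.last d) 1 : Fin (d+1) → ℝ))) := by
  set b : Fin (d+2) → ℝ :=
    c • (Pi.single (Fin.last (d+1)) 1 : Fin (d+2) → ℝ) + xd • (Pi.single (ps d) 1 : Fin (d+2) → ℝ)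
    with hb
  have harg : ∀ w : Fin (d+1) → ℝ,
      (ps d).insertNth (α := fun _ => ℝ) xd (w + c • (Pi.single (Fin.last d) 1 : Fin (d+1) → ℝ))
        = insL d w + b := by
    intro w
    rw [insertNth_eq_insL_add, map_add (insL d), _root_.map_smul, insL_single, succAbove_ps_last, hb]
    abel
  have hfun : (fun w => σ (pt w xd (w (Fin.last d) + c))) = fun w => σ (insL d w + b) := by
    funext w
    rw [pt_eq, update_last_add, harg w]
  rw [hfun, mderiv_eq_vdListF, vdListF_comp_affine σ (insL d) b]
  have hlist : (((idxList α).map (fun i => (Pi.single i 1 : Fin (d+1) → ℝ))).map (insL d))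
      = (idxList α).map (fun j => (Pi.single ((ps d).succAbove j) 1 : Fin (d+2) → ℝ)) := by
    rw [List.map_map]
    refine List.map_congr_left fun j _ => ?_
    exact insL_single j
  funext w
  rw [hlist, harg w]
  rfl

lemma continuous_insertNth_w (xd : ℝ) :
    Continuous (fun w : Fin (d+1) → ℝ => (ps d).insertNth (α := fun _ => ℝ) xd w) := by
  refine continuous_pi (fin_succAbove_cases (ps d) ?_ fun j => ?_)
  · simp only [Fin.insertNth_apply_same]
    exact continuous_const
  · simp only [Fin.insertNth_apply_succAbove]
    exact continuous_apply j

lemma measurable_insertNth_pair :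
    Measurable (fun q : ℝ × (Fin (d+1) → ℝ) => (ps d).insertNth (α := fun _ => ℝ) q.1 q.2) := by
  refine measurable_pi_iff.2 (fin_succAbove_cases (ps d) ?_ fun j => ?_)
  · simp only [Fin.insertNth_apply_same]
    exact measurable_fst
  · simp only [Fin.insertNth_apply_succAbove]
    exact (measurable_pi_apply j).comp measurable_snd

lemma L2N_slice (σ : 𝓢((Fin (d+2) → ℝ), ℝ)) (α : Fin (d+1) → ℕ) (xd c : ℝ) :
    L2N (mderiv α (fun w => σ (pt w xd (w (Fin.last d) + c))))
      = L2N (fun w => (GS σ α) ((ps d).insertNth (α := fun _ => ℝ) xd w)) := by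
  rw [slice_mderiv]
  have hcomp : (fun w : Fin (d+1) → ℝ => (GS σ α) ((ps d).insertNth (α := fun _ => ℝ) xd
        (w + c • (Pi.single (Fin.last d) 1 : Fin (d+1) → ℝ))))
      = (fun w => (GS σ α) ((ps d).insertNth (α := fun _ => ℝ) xd w))
          ∘ (· + c • (Pi.single (Fin.last d) 1 : Fin (d+1) → ℝ)) := rfl
  have hg : AEStronglyMeasurable
      (fun w : Fin (d+1) → ℝ => (GS σ α) ((ps d).insertNth (α := fun _ => ℝ) xd w)) volume :=
    ((GS σ α).continuous.comp (continuous_insertNth_w xd)).aestronglyMeasurable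
  rw [L2N, L2N, hcomp]
  exact eLpNorm_comp_measurePreserving hg (measurePreserving_add_right volume _)

lemma HsN_slice (σ : 𝓢((Fin (d+2) → ℝ), ℝ)) (t : ℕ) (xd c : ℝ) :
    HsN t (fun w => σ (pt w xd (w (Fin.last d) + c)))
      = ∑ α ∈ mIdx (d+1) t,
          L2N (fun w => (GS σ (fun i => (α i : ℕ))) ((ps d).insertNth (α := fun _ => ℝ) xd w)) :=
  Finset.sum_congr rfl fun α _ => L2N_slice σ (fun i => (α i : ℕ)) xd c

end Part4
end PSA

namespace PSA
open SchwartzMap Filter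

section Part5
variable {d : ℕ}

lemma L2N_eq {k : ℕ} (f : (Fin k → ℝ) → ℝ) :
    L2N f = (∫⁻ x, (‖f x‖₊ : ℝ≥0∞) ^ (2:ℝ)) ^ ((1:ℝ)/2) := by
  rw [L2N, eLpNorm_eq_lintegral_rpow_enorm_toReal (by norm_num) (by norm_num)]
  norm_num
  rfl

lemma lintegral_slice (G : (Fin (d+2) → ℝ) → ℝ≥0∞) (hG : Measurable G) :
    ∫⁻ z, G z
      = ∫⁻ t : ℝ, ∫⁻ w : Fin (d+1) → ℝ, G ((ps d).insertNth (α := fun _ => ℝ) t w) := by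
  have hmp := MeasureTheory.volume_preserving_piFinSuccAbove (fun _ : Fin (d+2) => ℝ) (ps d)
  have hF : Measurable (fun q : ℝ × (Fin (d+1) → ℝ) =>
      G ((ps d).insertNth (α := fun _ => ℝ) q.1 q.2)) := hG.comp measurable_insertNth_pair
  have h1 : ∫⁻ z, G z
      = ∫⁻ q : ℝ × (Fin (d+1) → ℝ), G ((ps d).insertNth (α := fun _ => ℝ) q.1 q.2) := by
    rw [← hmp.lintegral_comp hF]
    refine lintegral_congr fun z => ?_
    simp only [MeasurableEquiv.piFinSuccAbove_apply, Fin.insertNthEquiv_symm_apply]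
    congr 1
    exact (Fin.insertNth_self_removeNth (ps d) z).symm
  rw [h1, Measure.volume_eq_prod, lintegral_prod _ hF.aemeasurable]

lemma measurable_sq (g : 𝓢((Fin (d+2) → ℝ), ℝ)) :
    Measurable (fun z : Fin (d+2) → ℝ => (‖g z‖₊ : ℝ≥0∞) ^ (2:ℝ)) :=
  ENNReal.continuous_rpow_const.measurable.comp
    (g.continuous.measurable.nnnorm.coe_nnreal_ennreal)

lemma measurable_sq_slice (g : 𝓢((Fin (d+2) → ℝ), ℝ)) :
    Measurable (fun q : ℝ × (Fin (d+1) → ℝ) =>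
      (‖g ((ps d).insertNth (α := fun _ => ℝ) q.1 q.2)‖₊ : ℝ≥0∞) ^ (2:ℝ)) := by
  exact (measurable_sq g).comp measurable_insertNth_pair

lemma continuous_curve (w : Fin (d+1) → ℝ) :
    Continuous (fun t : ℝ => (ps d).insertNth (α := fun _ => ℝ) t w) := by
  have hfun : (fun t : ℝ => (ps d).insertNth (α := fun _ => ℝ) t w)
      = fun t => insL d w + t • (Pi.single (ps d) 1 : Fin (d+2) → ℝ) :=
    funext fun t => insertNth_eq_insL_add t w
  rw [hfun]
  exact continuous_const.add (continuous_id.smul continuous_const)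

lemma sch_bound (g : 𝓢((Fin (d+2) → ℝ), ℝ)) (w : Fin (d+1) → ℝ) :
    ∃ C : ℝ, 0 < C ∧ ∀ t : ℝ,
      |g ((ps d).insertNth (α := fun _ => ℝ) t w)| ≤ C / (1 + |t|) := by
  obtain ⟨C0, hC0, h0⟩ := g.decay 0 0
  obtain ⟨C1, hC1, h1⟩ := g.decay 1 0
  refine ⟨C0 + C1, by positivity, fun t => ?_⟩
  set z := (ps d).insertNth (α := fun _ => ℝ) t w with hz
  rw [le_div_iff₀ (by positivity)]
  have e0 : |g z| ≤ C0 := by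
    have := h0 z
    simpa [norm_iteratedFDeriv_zero, Real.norm_eq_abs] using this
  have e1 : ‖z‖ * |g z| ≤ C1 := by
    have := h1 z
    simpa [norm_iteratedFDeriv_zero, Real.norm_eq_abs] using this
  have habs : |t| ≤ ‖z‖ := by
    have h2 : ‖z (ps d)‖ ≤ ‖z‖ := norm_le_pi_norm z (ps d)
    rw [hz, Fin.insertNth_apply_same] at h2
    simpa [Real.norm_eq_abs] using h2
  have hzn : (0:ℝ) ≤ ‖z‖ := norm_nonneg z
  nlinarith [abs_nonneg (g z)]

lemma enn_sq (r : ℝ) : (‖r‖₊ : ℝ≥0∞) ^ (2:ℝ) = ENNReal.ofReal (r ^ 2) := by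
  rw [show ((‖r‖₊ : ℝ≥0∞)) = ‖r‖ₑ from rfl, Real.enorm_eq_ofReal_abs,
    ENNReal.ofReal_rpow_of_nonneg (abs_nonneg r) (by norm_num : (0:ℝ) ≤ 2)]
  congr 1
  rw [show (2:ℝ) = ((2:ℕ):ℝ) by norm_num, Real.rpow_natCast, sq_abs]

lemma trace_pointwise (g : 𝓢((Fin (d+2) → ℝ), ℝ)) (xd : ℝ) (w : Fin (d+1) → ℝ) :
    (‖g ((ps d).insertNth (α := fun _ => ℝ) xd w)‖₊ : ℝ≥0∞) ^ (2:ℝ)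
      ≤ ∫⁻ t : ℝ, ((‖g ((ps d).insertNth (α := fun _ => ℝ) t w)‖₊ : ℝ≥0∞) ^ (2:ℝ)
          + (‖(vdS (Pi.single (ps d) 1) g) ((ps d).insertNth (α := fun _ => ℝ) t w)‖₊ : ℝ≥0∞)
            ^ (2:ℝ)) := by
  set g' := vdS (Pi.single (ps d) 1) g with hgdef
  set h : ℝ → ℝ := fun t => g ((ps d).insertNth (α := fun _ => ℝ) t w) with hh
  set h' : ℝ → ℝ := fun t => g' ((ps d).insertNth (α := fun _ => ℝ) t w) with hh'
  have hcurve : ∀ t : ℝ, HasDerivAt (fun t : ℝ => (ps d).insertNth (α := fun _ => ℝ) t w)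
      ((Pi.single (ps d) 1 : Fin (d+2) → ℝ)) t := by
    intro t
    have hfun : (fun t : ℝ => (ps d).insertNth (α := fun _ => ℝ) t w)
        = fun t => insL d w + t • (Pi.single (ps d) 1 : Fin (d+2) → ℝ) :=
      funext fun t => insertNth_eq_insL_add t w
    rw [hfun]
    simpa using
      ((hasDerivAt_id t).smul_const ((Pi.single (ps d) 1 : Fin (d+2) → ℝ))).const_add (insL d w)
  have hdh : ∀ t, HasDerivAt h (h' t) t := by
    intro t
    have h2 := (sch_differentiable g _).hasFDerivAt.comp_hasDerivAt t (hcurve t)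
    have h3 : h' t = fderiv ℝ g ((ps d).insertNth (α := fun _ => ℝ) t w)
        ((Pi.single (ps d) 1 : Fin (d+2) → ℝ)) := vdS_apply _ g _
    rw [h3]
    exact h2
  have hcont : Continuous h := g.continuous.comp (continuous_curve w)
  have hcont' : Continuous h' := g'.continuous.comp (continuous_curve w)
  obtain ⟨C, hCpos, hC⟩ := sch_bound g w
  obtain ⟨D, hDpos, hD⟩ := sch_bound g' w
  have hsqb : ∀ (K : ℝ) (u : ℝ → ℝ), 0 < K → (∀ t, |u t| ≤ K / (1 + |t|)) →
      ∀ t : ℝ, u t ^ 2 ≤ K^2 * (1 + t^2)⁻¹ := by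
    intro K u hK hu t
    have h1 : u t ^ 2 ≤ (K / (1 + |t|))^2 := by
      rw [← sq_abs (u t)]
      exact pow_le_pow_left₀ (abs_nonneg _) (hu t) 2
    have h2 : (1 + t^2) ≤ (1 + |t|)^2 := by nlinarith [abs_nonneg t, sq_abs t]
    have h3 : (K / (1 + |t|))^2 = K^2 / (1 + |t|)^2 := by rw [div_pow]
    have h4 : K^2 / (1 + |t|)^2 ≤ K^2 / (1 + t^2) :=
      div_le_div_of_nonneg_left (by positivity) (by positivity) h2
    calc u t ^2 ≤ K^2/(1+|t|)^2 := h3 ▸ h1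
      _ ≤ K^2/(1+t^2) := h4
      _ = K^2 * (1+t^2)⁻¹ := by rw [div_eq_mul_inv]
  have hint_h2 : Integrable (fun t => h t ^ 2) := by
    refine Integrable.mono' (integrable_inv_one_add_sq.const_mul (C^2))
      ((hcont.pow 2).aestronglyMeasurable) (ae_of_all _ fun t => ?_)
    rw [Real.norm_eq_abs, abs_of_nonneg (sq_nonneg _)]
    exact hsqb C h hCpos hC t
  have hint_h2' : Integrable (fun t => h' t ^ 2) := by
    refine Integrable.mono' (integrable_inv_one_add_sq.const_mul (D^2))
      ((hcont'.pow 2).aestronglyMeasurable) (ae_of_all _ fun t => ?_)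
    rw [Real.norm_eq_abs, abs_of_nonneg (sq_nonneg _)]
    exact hsqb D h' hDpos hD t
  have habs2 : ∀ t, |2 * h t * h' t| ≤ h t ^2 + h' t ^2 := by
    intro t
    have h1 : |2 * h t * h' t| = 2 * |h t| * |h' t| := by
      rw [abs_mul, abs_mul, abs_two]
    rw [h1]
    nlinarith [two_mul_le_add_sq |h t| |h' t|, sq_abs (h t), sq_abs (h' t)]
  have hint_hh' : Integrable (fun t => 2 * h t * h' t) := by
    refine Integrable.mono' (hint_h2.add hint_h2')
      (((continuous_const.mul hcont).mul hcont').aestronglyMeasurable)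
      (ae_of_all _ fun t => ?_)
    rw [Real.norm_eq_abs]
    exact habs2 t
  have hq : ∀ t : ℝ, HasDerivAt (fun t => h t ^ 2) (2 * h t * h' t) t := by
    intro t
    have := (hdh t).fun_pow 2
    simpa [pow_one, mul_comm, mul_assoc, mul_left_comm] using this
  have hq0 : Tendsto (fun t => h t ^ 2) atTop (nhds 0) := by
    have hb : Tendsto (fun t : ℝ => C / (1 + |t|)) atTop (nhds 0) :=
      tendsto_const_nhds.div_atTop
        (tendsto_atTop_add_const_left _ 1 tendsto_abs_atTop_atTop)
    have hht : Tendsto h atTop (nhds 0) :=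
      squeeze_zero_norm (fun t => by rw [Real.norm_eq_abs]; exact hC t) hb
    simpa using hht.pow 2
  have key := integral_Ioi_of_hasDerivAt_of_tendsto' (a := xd) (f' := fun t => 2 * h t * h' t)
    (fun t _ => hq t) hint_hh'.integrableOn hq0
  have hle : h xd ^ 2 ≤ ∫ t : ℝ, (h t ^ 2 + h' t ^ 2) := by
    have e1 : h xd ^ 2 = - ∫ t in Set.Ioi xd, 2 * h t * h' t := by rw [key]; ring
    have e2 : - ∫ t in Set.Ioi xd, 2 * h t * h' t
        ≤ |∫ t in Set.Ioi xd, 2 * h t * h' t| := neg_le_abs _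
    have e3 : |∫ t in Set.Ioi xd, 2 * h t * h' t|
        ≤ ∫ t in Set.Ioi xd, |2 * h t * h' t| := by
      have e3' := norm_integral_le_integral_norm (μ := volume.restrict (Set.Ioi xd))
        (fun t => 2 * h t * h' t)
      simp only [Real.norm_eq_abs] at e3'
      exact e3'
    have e4 : ∫ t in Set.Ioi xd, |2 * h t * h' t|
        ≤ ∫ t in Set.Ioi xd, (h t ^ 2 + h' t ^ 2) := by
      refine integral_mono hint_hh'.abs.integrableOn
        (hint_h2.add hint_h2').integrableOn (fun t => habs2 t)
    have e5 : ∫ t in Set.Ioi xd, (h t ^ 2 + h' t ^ 2) ≤ ∫ t : ℝ, (h t ^2 + h' t ^2) :=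
      setIntegral_le_integral (hint_h2.add hint_h2')
        (ae_of_all _ fun t => by positivity)
    linarith
  show (‖h xd‖₊ : ℝ≥0∞) ^ (2:ℝ)
      ≤ ∫⁻ t : ℝ, ((‖h t‖₊ : ℝ≥0∞) ^ (2:ℝ) + (‖h' t‖₊ : ℝ≥0∞) ^ (2:ℝ))
  calc (‖h xd‖₊ : ℝ≥0∞) ^ (2:ℝ) = ENNReal.ofReal (h xd ^ 2) := enn_sq _
    _ ≤ ENNReal.ofReal (∫ t : ℝ, (h t ^ 2 + h' t ^ 2)) := ENNReal.ofReal_le_ofReal hle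
    _ = ∫⁻ t : ℝ, ENNReal.ofReal (h t ^ 2 + h' t ^ 2) :=
        ofReal_integral_eq_lintegral_ofReal (hint_h2.add hint_h2')
          (ae_of_all _ fun t => by positivity)
    _ = ∫⁻ t : ℝ, ((‖h t‖₊ : ℝ≥0∞) ^ (2:ℝ) + (‖h' t‖₊ : ℝ≥0∞) ^ (2:ℝ)) := by
        refine lintegral_congr fun t => ?_
        rw [ENNReal.ofReal_add (sq_nonneg _) (sq_nonneg _), enn_sq, enn_sq]

lemma measurable_ins_w (t : ℝ) :
    Measurable (fun w : Fin (d+1) → ℝ => (ps d).insertNth (α := fun _ => ℝ) t w) :=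
  measurable_insertNth_pair.comp (measurable_prodMk_left (x := t))

lemma lint_swap_add (A B : (Fin (d+2) → ℝ) → ℝ≥0∞) (hA : Measurable A) (hB : Measurable B) :
    (∫⁻ w : Fin (d+1) → ℝ, ∫⁻ t : ℝ,
        (A ((ps d).insertNth (α := fun _ => ℝ) t w) + B ((ps d).insertNth (α := fun _ => ℝ) t w)))
      = (∫⁻ z, A z) + ∫⁻ z, B z := by
  have hAp : Measurable (fun q : ℝ × (Fin (d+1) → ℝ) =>
      A ((ps d).insertNth (α := fun _ => ℝ) q.1 q.2)) := hA.comp measurable_insertNth_pair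
  have hBp : Measurable (fun q : ℝ × (Fin (d+1) → ℝ) =>
      B ((ps d).insertNth (α := fun _ => ℝ) q.1 q.2)) := hB.comp measurable_insertNth_pair
  calc (∫⁻ w : Fin (d+1) → ℝ, ∫⁻ t : ℝ,
        (A ((ps d).insertNth (α := fun _ => ℝ) t w) + B ((ps d).insertNth (α := fun _ => ℝ) t w)))
      = ∫⁻ t : ℝ, ∫⁻ w : Fin (d+1) → ℝ,
          (A ((ps d).insertNth (α := fun _ => ℝ) t w)
            + B ((ps d).insertNth (α := fun _ => ℝ) t w)) := by
        refine lintegral_lintegral_swap ?_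
        exact ((hAp.comp measurable_swap).add (hBp.comp measurable_swap)).aemeasurable
    _ = ∫⁻ t : ℝ, ((∫⁻ w : Fin (d+1) → ℝ, A ((ps d).insertNth (α := fun _ => ℝ) t w))
          + ∫⁻ w : Fin (d+1) → ℝ, B ((ps d).insertNth (α := fun _ => ℝ) t w)) := by
        refine lintegral_congr fun t => ?_
        exact lintegral_add_left (hA.comp (measurable_ins_w t)) _
    _ = (∫⁻ t : ℝ, ∫⁻ w : Fin (d+1) → ℝ, A ((ps d).insertNth (α := fun _ => ℝ) t w))
          + ∫⁻ t : ℝ, ∫⁻ w : Fin (d+1) → ℝ, B ((ps d).insertNth (α := fun _ => ℝ) t w) := by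
        exact lintegral_add_left hAp.lintegral_prod_right' _
    _ = (∫⁻ z, A z) + ∫⁻ z, B z := by
        rw [← lintegral_slice A hA, ← lintegral_slice B hB]

lemma trace_core (g : 𝓢((Fin (d+2) → ℝ), ℝ)) (xd : ℝ) :
    ∫⁻ w : Fin (d+1) → ℝ, (‖g ((ps d).insertNth (α := fun _ => ℝ) xd w)‖₊ : ℝ≥0∞) ^ (2:ℝ)
      ≤ (∫⁻ z, (‖g z‖₊ : ℝ≥0∞) ^ (2:ℝ))
        + ∫⁻ z, (‖(vdS (Pi.single (ps d) 1) g) z‖₊ : ℝ≥0∞) ^ (2:ℝ) := by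
  have step1 : (∫⁻ w : Fin (d+1) → ℝ,
        (‖g ((ps d).insertNth (α := fun _ => ℝ) xd w)‖₊ : ℝ≥0∞) ^ (2:ℝ))
      ≤ ∫⁻ w : Fin (d+1) → ℝ, ∫⁻ t : ℝ,
          ((‖g ((ps d).insertNth (α := fun _ => ℝ) t w)‖₊ : ℝ≥0∞) ^ (2:ℝ)
            + (‖(vdS (Pi.single (ps d) 1) g)
                ((ps d).insertNth (α := fun _ => ℝ) t w)‖₊ : ℝ≥0∞) ^ (2:ℝ)) :=
    lintegral_mono fun w => trace_pointwise g xd w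
  refine step1.trans (le_of_eq ?_)
  exact lint_swap_add _ _ (measurable_sq g) (measurable_sq (vdS (Pi.single (ps d) 1) g))

end Part5
end PSA


namespace PSA
open SchwartzMap

section Part6
variable {d : ℕ}

lemma pow_two_eq_rpow (x : ℝ≥0∞) : x ^ (2:ℕ) = x ^ (2:ℝ) := by
  rw [← ENNReal.rpow_natCast]
  norm_num

lemma sqrt_sq_enn (x : ℝ≥0∞) : (x ^ ((1:ℝ)/2)) ^ (2:ℝ) = x := by
  rw [← ENNReal.rpow_mul]
  norm_num

lemma minkowski_finset {ι : Type*} (A : Finset ι) (u : ι → ℝ → ℝ≥0∞)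
    (hu : ∀ i, Measurable (u i)) :
    (∫⁻ x : ℝ, (∑ i ∈ A, u i x) ^ (2:ℝ)) ^ ((1:ℝ)/2)
      ≤ ∑ i ∈ A, (∫⁻ x : ℝ, (u i x) ^ (2:ℝ)) ^ ((1:ℝ)/2) := by
  classical
  induction A using Finset.induction_on with
  | empty =>
    simp only [Finset.sum_empty]
    rw [ENNReal.zero_rpow_of_pos (by norm_num), lintegral_zero,
      ENNReal.zero_rpow_of_pos (by norm_num)]
  | insert a s ha ih =>
    have hsum : ∀ x : ℝ, (∑ i ∈ insert a s, u i x) = u a x + ∑ i ∈ s, u i x :=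
      fun x => Finset.sum_insert ha
    calc (∫⁻ x : ℝ, (∑ i ∈ insert a s, u i x) ^ (2:ℝ)) ^ ((1:ℝ)/2)
        = (∫⁻ x : ℝ, (u a x + ∑ i ∈ s, u i x) ^ (2:ℝ)) ^ ((1:ℝ)/2) := by
          congr 1
          exact lintegral_congr fun x => by rw [hsum x]
      _ ≤ (∫⁻ x : ℝ, (u a x) ^ (2:ℝ)) ^ ((1:ℝ)/2)
            + (∫⁻ x : ℝ, (∑ i ∈ s, u i x) ^ (2:ℝ)) ^ ((1:ℝ)/2) :=
          ENNReal.lintegral_Lp_add_le (hu a).aemeasurable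
            (Finset.measurable_sum s fun i _ => hu i).aemeasurable one_le_two
      _ ≤ (∫⁻ x : ℝ, (u a x) ^ (2:ℝ)) ^ ((1:ℝ)/2)
            + ∑ i ∈ s, (∫⁻ x : ℝ, (u i x) ^ (2:ℝ)) ^ ((1:ℝ)/2) := add_le_add_right ih _
      _ = ∑ i ∈ insert a s, (∫⁻ x : ℝ, (u i x) ^ (2:ℝ)) ^ ((1:ℝ)/2) :=
          (Finset.sum_insert (f := fun i => (∫⁻ x : ℝ, (u i x) ^ (2:ℝ)) ^ ((1:ℝ)/2)) ha).symm

lemma L2N_mderiv_le_HsN {n t : ℕ} (f : (Fin n → ℝ) → ℝ) (β : Fin n → ℕ)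
    (hβ : ∑ i, β i ≤ t) : L2N (mderiv β f) ≤ HsN t f := by
  have hlt : ∀ i, β i < t + 1 := fun i =>
    Nat.lt_succ_of_le (le_trans
      (Finset.single_le_sum (f := fun i => β i) (fun _ _ => Nat.zero_le _)
        (Finset.mem_univ i)) hβ)
  have hmem : (fun i => (⟨β i, hlt i⟩ : Fin (t+1))) ∈ mIdx n t := by
    rw [mIdx, Finset.mem_filter]
    exact ⟨Finset.mem_univ _, by simpa using hβ⟩
  have heq : mderiv (F := ℝ) (fun i => ((⟨β i, hlt i⟩ : Fin (t+1)) : ℕ)) f = mderiv β f := rfl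
  have step := Finset.single_le_sum (f := fun α => L2N (mderiv (fun i => ((α i : ℕ))) f))
    (fun _ _ => zero_le) hmem
  exact le_trans (le_of_eq (congrArg L2N heq.symm)) step

lemma GS_L2N_le_HsN (σ : 𝓢((Fin (d+2) → ℝ), ℝ)) (α : Fin (d+1) → ℕ) {s : ℕ}
    (hα : ∑ i, α i ≤ s + 1) : L2N ⇑(GS σ α) ≤ HsN (s+1) ⇑σ := by
  rw [coe_GS]
  refine L2N_mderiv_le_HsN _ _ ?_
  rw [sum_insertNth]
  omega

lemma vdS_GS_L2N_le_HsN (σ : 𝓢((Fin (d+2) → ℝ), ℝ)) (α : Fin (d+1) → ℕ) {s : ℕ}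
    (hα : ∑ i, α i ≤ s) : L2N ⇑(vdS (Pi.single (ps d) 1) (GS σ α)) ≤ HsN (s+1) ⇑σ := by
  rw [coe_vdS_GS]
  refine L2N_mderiv_le_HsN _ _ ?_
  rw [sum_insertNth]
  omega

lemma slice_L2N_le (σ : 𝓢((Fin (d+2) → ℝ), ℝ)) (α : Fin (d+1) → ℕ) (xd : ℝ) :
    L2N (fun w => (GS σ α) ((ps d).insertNth (α := fun _ => ℝ) xd w))
      ≤ L2N ⇑(GS σ α) + L2N ⇑(vdS (Pi.single (ps d) 1) (GS σ α)) := by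
  rw [L2N_eq, L2N_eq, L2N_eq]
  refine le_trans (ENNReal.rpow_le_rpow (trace_core (GS σ α) xd) (by norm_num)) ?_
  exact ENNReal.rpow_add_le_add_rpow _ _ (by norm_num) (by norm_num)

lemma slice_L2N_le_HsN (σ : 𝓢((Fin (d+2) → ℝ), ℝ)) (α : Fin (d+1) → ℕ) {s : ℕ}
    (hα : ∑ i, α i ≤ s) (xd : ℝ) :
    L2N (fun w => (GS σ α) ((ps d).insertNth (α := fun _ => ℝ) xd w))
      ≤ 2 * HsN (s+1) ⇑σ := by
  calc L2N (fun w => (GS σ α) ((ps d).insertNth (α := fun _ => ℝ) xd w))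
      ≤ L2N ⇑(GS σ α) + L2N ⇑(vdS (Pi.single (ps d) 1) (GS σ α)) := slice_L2N_le σ α xd
    _ ≤ HsN (s+1) ⇑σ + HsN (s+1) ⇑σ :=
        add_le_add (GS_L2N_le_HsN σ α (by omega)) (vdS_GS_L2N_le_HsN σ α hα)
    _ = 2 * HsN (s+1) ⇑σ := (two_mul _).symm

lemma measurable_nu (g : 𝓢((Fin (d+2) → ℝ), ℝ)) :
    Measurable (fun xd : ℝ =>
      L2N (fun w => g ((ps d).insertNth (α := fun _ => ℝ) xd w))) := by
  have h1 : Measurable (fun xd : ℝ => ∫⁻ w : Fin (d+1) → ℝ,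
      (‖g ((ps d).insertNth (α := fun _ => ℝ) xd w)‖₊ : ℝ≥0∞) ^ (2:ℝ)) :=
    (measurable_sq_slice g).lintegral_prod_right'
  have h2 : (fun xd : ℝ => L2N (fun w => g ((ps d).insertNth (α := fun _ => ℝ) xd w)))
      = fun xd => (∫⁻ w : Fin (d+1) → ℝ,
          (‖g ((ps d).insertNth (α := fun _ => ℝ) xd w)‖₊ : ℝ≥0∞) ^ (2:ℝ)) ^ ((1:ℝ)/2) :=
    funext fun xd => L2N_eq _
  rw [h2]
  exact ENNReal.continuous_rpow_const.measurable.comp h1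

lemma nu_L2 (g : 𝓢((Fin (d+2) → ℝ), ℝ)) :
    (∫⁻ xd : ℝ,
        (L2N (fun w => g ((ps d).insertNth (α := fun _ => ℝ) xd w))) ^ (2:ℝ)) ^ ((1:ℝ)/2)
      = L2N ⇑g := by
  have h1 : ∀ xd : ℝ,
      (L2N (fun w => g ((ps d).insertNth (α := fun _ => ℝ) xd w))) ^ (2:ℝ)
        = ∫⁻ w : Fin (d+1) → ℝ,
            (‖g ((ps d).insertNth (α := fun _ => ℝ) xd w)‖₊ : ℝ≥0∞) ^ (2:ℝ) := by
    intro xd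
    rw [L2N_eq, sqrt_sq_enn]
  rw [lintegral_congr h1, ← lintegral_slice _ (measurable_sq g), ← L2N_eq]

end Part6
end PSA

/-- substituting `θ₀ + ω ξ_d` into a Schwartz profile is bounded
from `H^{s+1}` into `𝓔^s`, uniformly in `ω`. -/
theorem profile_substitution_Es_bound (d : ℕ) (hd : 1 ≤ d) (s : ℕ) :
    ∃ C : ℝ, 0 < C ∧ ∀ (ω : ℝ) (σ : SchwartzMap ((Fin (d + 2)) → ℝ) ℝ),
      CalEsN s (fun ξd xd (w : Fin (d + 1) → ℝ) =>
          σ (pt w xd (w (Fin.last d) + ω * ξd)))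
        ≤ ENNReal.ofReal C * HsN (s + 1) (⇑σ) := by
  classical
  set N1 := (mIdx (d+1) s).card with hN1
  set N2 := (mIdx (d+1) (s+1)).card with hN2
  refine ⟨((2*N1 + N2 + 1 : ℕ) : ℝ), by exact_mod_cast Nat.succ_pos _, fun ω σ => ?_⟩
  simp only [CalEsN, EsN]
  refine iSup₂_le fun ξd _ => ?_
  have hsup : (⨆ xd ∈ Set.Ici (0:ℝ), HsN s
      (fun w : Fin (d+1) → ℝ => σ (pt w xd (w (Fin.last d) + ω * ξd))))
      ≤ ((2 * N1 : ℕ) : ℝ≥0∞) * HsN (s+1) ⇑σ := by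
    refine iSup₂_le fun xd _ => ?_
    rw [PSA.HsN_slice σ s xd (ω * ξd)]
    calc ∑ α ∈ mIdx (d+1) s, L2N (fun w => (PSA.GS σ (fun i => (α i : ℕ)))
            ((PSA.ps d).insertNth (α := fun _ => ℝ) xd w))
        ≤ ∑ _α ∈ mIdx (d+1) s, 2 * HsN (s+1) ⇑σ := by
          refine Finset.sum_le_sum fun α hα => ?_
          exact PSA.slice_L2N_le_HsN σ _ ((Finset.mem_filter.1 hα).2) xd
      _ = ((2*N1 : ℕ) : ℝ≥0∞) * HsN (s+1) ⇑σ := by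
          rw [Finset.sum_const, nsmul_eq_mul, ← hN1]
          push_cast
          ring
  have hint : (∫⁻ xd in Set.Ici (0:ℝ), (HsN (s+1)
      (fun w : Fin (d+1) → ℝ => σ (pt w xd (w (Fin.last d) + ω * ξd)))) ^ 2) ^ (1/2 : ℝ)
      ≤ ((N2 : ℕ) : ℝ≥0∞) * HsN (s+1) ⇑σ := by
    have h1 : ∀ xd : ℝ, HsN (s+1)
        (fun w : Fin (d+1) → ℝ => σ (pt w xd (w (Fin.last d) + ω * ξd)))
          = ∑ α ∈ mIdx (d+1) (s+1), L2N (fun w => (PSA.GS σ (fun i => (α i : ℕ)))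
              ((PSA.ps d).insertNth (α := fun _ => ℝ) xd w)) :=
      fun xd => PSA.HsN_slice σ (s+1) xd (ω * ξd)
    calc (∫⁻ xd in Set.Ici (0:ℝ), (HsN (s+1)
          (fun w : Fin (d+1) → ℝ => σ (pt w xd (w (Fin.last d) + ω * ξd)))) ^ 2) ^ (1/2 : ℝ)
        ≤ (∫⁻ xd : ℝ, (∑ α ∈ mIdx (d+1) (s+1), L2N (fun w => (PSA.GS σ (fun i => (α i : ℕ)))
              ((PSA.ps d).insertNth (α := fun _ => ℝ) xd w))) ^ (2:ℝ)) ^ ((1:ℝ)/2) := by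
          refine ENNReal.rpow_le_rpow ?_ (by norm_num)
          have e1 : (∫⁻ xd in Set.Ici (0:ℝ), (HsN (s+1)
              (fun w : Fin (d+1) → ℝ => σ (pt w xd (w (Fin.last d) + ω * ξd)))) ^ 2)
              = ∫⁻ xd in Set.Ici (0:ℝ), (∑ α ∈ mIdx (d+1) (s+1),
                  L2N (fun w => (PSA.GS σ (fun i => (α i : ℕ)))
                    ((PSA.ps d).insertNth (α := fun _ => ℝ) xd w))) ^ (2:ℝ) :=
            lintegral_congr fun xd => by rw [h1 xd, PSA.pow_two_eq_rpow]
          rw [e1]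
          exact setLIntegral_le_lintegral _ _
      _ ≤ ∑ α ∈ mIdx (d+1) (s+1), (∫⁻ xd : ℝ, (L2N (fun w => (PSA.GS σ (fun i => (α i : ℕ)))
              ((PSA.ps d).insertNth (α := fun _ => ℝ) xd w))) ^ (2:ℝ)) ^ ((1:ℝ)/2) :=
          PSA.minkowski_finset _ _ (fun α => PSA.measurable_nu (PSA.GS σ _))
      _ = ∑ α ∈ mIdx (d+1) (s+1), L2N ⇑(PSA.GS σ (fun i => (α i : ℕ))) :=
          Finset.sum_congr rfl fun α _ => PSA.nu_L2 _
      _ ≤ ∑ _α ∈ mIdx (d+1) (s+1), HsN (s+1) ⇑σ :=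
          Finset.sum_le_sum fun α hα => PSA.GS_L2N_le_HsN σ _ ((Finset.mem_filter.1 hα).2)
      _ = ((N2 : ℕ) : ℝ≥0∞) * HsN (s+1) ⇑σ := by
          rw [Finset.sum_const, nsmul_eq_mul, ← hN2]
  calc (⨆ xd ∈ Set.Ici (0:ℝ), HsN s
        (fun w : Fin (d+1) → ℝ => σ (pt w xd (w (Fin.last d) + ω * ξd))))
        + (∫⁻ xd in Set.Ici (0:ℝ), (HsN (s+1)
            (fun w : Fin (d+1) → ℝ => σ (pt w xd (w (Fin.last d) + ω * ξd)))) ^ 2) ^ (1/2 : ℝ)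
      ≤ ((2 * N1 : ℕ) : ℝ≥0∞) * HsN (s+1) ⇑σ + ((N2 : ℕ) : ℝ≥0∞) * HsN (s+1) ⇑σ :=
        add_le_add hsup hint
    _ = ((2 * N1 + N2 : ℕ) : ℝ≥0∞) * HsN (s+1) ⇑σ := by
        push_cast
        ring
    _ ≤ ENNReal.ofReal ((2*N1 + N2 + 1 : ℕ) : ℝ) * HsN (s+1) ⇑σ := by
        refine mul_le_mul_left ?_ _
        rw [ENNReal.ofReal_natCast]
        exact_mod_cast Nat.le_succ _


end
end

section
/- (Symmetry of the self-interaction coefficients.) Let N ≥ 1 and q ≥ 1, let U ⊆ ℝ^q be an open neighborhood of 0, and let A : U → M_N(ℝ), ω : U → ℝ and P : U → M_N(ℝ) be differentiable at 0. Assume (ω(u)I + A(u)) P(u) = 0 for all u ∈ U, that P(0) is idempotent (P(0)² = P(0)), and that P(0)(ω(0)I + A(0)) = 0. Then for every w ∈ ℝ^q, P(0) (dA(0)·w) P(0) = −(dω(0)·w) P(0), where dA(0)·w ∈ M_N(ℝ) and dω(0)·w ∈ ℝ denote the directional derivatives of A and ω at 0 in the direction w. -/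
/-- symmetry of the self-interaction coefficients, obtained by
differentiating the eigenprojection relation. -/
theorem self_interaction_symmetry (N q : ℕ) (hN : 1 ≤ N) (hq : 1 ≤ q)
    (U : Set (Fin q → ℝ)) (hUopen : IsOpen U) (hU0 : (0 : Fin q → ℝ) ∈ U)
    (A : (Fin q → ℝ) → Matrix (Fin N) (Fin N) ℝ)
    (ω : (Fin q → ℝ) → ℝ)
    (P : (Fin q → ℝ) → Matrix (Fin N) (Fin N) ℝ)
    (hAdiff : ∀ i j, DifferentiableAt ℝ (fun u => A u i j) 0)
    (hωdiff : DifferentiableAt ℝ ω 0)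
    (hPdiff : ∀ i j, DifferentiableAt ℝ (fun u => P u i j) 0)
    (heig : ∀ u ∈ U, (ω u • (1 : Matrix (Fin N) (Fin N) ℝ) + A u) * P u = 0)
    (hidem : P 0 * P 0 = P 0)
    (hleft : P 0 * (ω 0 • (1 : Matrix (Fin N) (Fin N) ℝ) + A 0) = 0) :
    ∀ w : Fin q → ℝ,
      P 0 * Matrix.of (fun i j => fderiv ℝ (fun u => A u i j) 0 w) * P 0 =
        (-(fderiv ℝ ω 0 w)) • P 0 := by
  intro w
  set A' : Matrix (Fin N) (Fin N) ℝ :=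
    Matrix.of (fun i j => fderiv ℝ (fun u => A u i j) 0 w) with hA'
  set P' : Matrix (Fin N) (Fin N) ℝ :=
    Matrix.of (fun i j => fderiv ℝ (fun u => P u i j) 0 w) with hP'
  set d : ℝ := fderiv ℝ ω 0 w with hd
  -- Key: differentiate the eigen relation entrywise
  have key : (d • (1 : Matrix (Fin N) (Fin N) ℝ) + A') * P 0
      + (ω 0 • (1 : Matrix (Fin N) (Fin N) ℝ) + A 0) * P' = 0 := by
    ext i j
    -- derivative of each term of the sum
    have hterm : ∀ k : Fin N, HasFDerivAt
        (fun u => (ω u * (1 : Matrix (Fin N) (Fin N) ℝ) i k + A u i k) * P u k j)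
        ((ω 0 * (1 : Matrix (Fin N) (Fin N) ℝ) i k + A 0 i k) •
            fderiv ℝ (fun u => P u k j) 0
          + P 0 k j • (((1 : Matrix (Fin N) (Fin N) ℝ) i k) • fderiv ℝ ω 0
            + fderiv ℝ (fun u => A u i k) 0)) 0 := by
      intro k
      have h1 : HasFDerivAt (fun u => ω u * (1 : Matrix (Fin N) (Fin N) ℝ) i k + A u i k)
          (((1 : Matrix (Fin N) (Fin N) ℝ) i k) • fderiv ℝ ω 0
            + fderiv ℝ (fun u => A u i k) 0) 0 := by
        have := (hωdiff.hasFDerivAt.mul_const ((1 : Matrix (Fin N) (Fin N) ℝ) i k)).add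
          (hAdiff i k).hasFDerivAt
        exact this
      exact h1.mul (hPdiff k j).hasFDerivAt
    have hsum : HasFDerivAt
        (fun u => ∑ k, (ω u * (1 : Matrix (Fin N) (Fin N) ℝ) i k + A u i k) * P u k j)
        (∑ k, ((ω 0 * (1 : Matrix (Fin N) (Fin N) ℝ) i k + A 0 i k) •
            fderiv ℝ (fun u => P u k j) 0
          + P 0 k j • (((1 : Matrix (Fin N) (Fin N) ℝ) i k) • fderiv ℝ ω 0
            + fderiv ℝ (fun u => A u i k) 0))) 0 :=
      HasFDerivAt.fun_sum (fun k _ => hterm k)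
    -- the function is eventually 0
    have hev : (fun u => ∑ k, (ω u * (1 : Matrix (Fin N) (Fin N) ℝ) i k + A u i k) * P u k j)
        =ᶠ[nhds (0 : Fin q → ℝ)] (fun _ => (0 : ℝ)) := by
      filter_upwards [hUopen.mem_nhds hU0] with u hu
      have := heig u hu
      have h0 := congrFun (congrFun this i) j
      simpa [Matrix.mul_apply, Matrix.add_apply, Matrix.smul_apply, smul_eq_mul] using h0
    have hzero : fderiv ℝ
        (fun u => ∑ k, (ω u * (1 : Matrix (Fin N) (Fin N) ℝ) i k + A u i k) * P u k j) 0 = 0 := by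
      rw [Filter.EventuallyEq.fderiv_eq hev]
      exact fderiv_const_apply 0
    have := congrArg (fun L => L w) (hsum.fderiv.symm.trans hzero)
    simp only [ContinuousLinearMap.coe_sum', Finset.sum_apply, ContinuousLinearMap.add_apply,
      ContinuousLinearMap.coe_smul', Pi.smul_apply, ContinuousLinearMap.zero_apply,
      smul_eq_mul] at this
    have goal' : (∑ k, ((d * (1 : Matrix (Fin N) (Fin N) ℝ) i k + A' i k) * P 0 k j
        + (ω 0 * (1 : Matrix (Fin N) (Fin N) ℝ) i k + A 0 i k) * P' k j)) = 0 := by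
      rw [← this]
      congr 1
      ext k
      simp [hA', hP', hd]
      ring
    simpa [Matrix.mul_apply, Matrix.add_apply, Matrix.smul_apply, smul_eq_mul,
      Finset.sum_add_distrib] using goal'
  -- matrix algebra
  have h2 := congrArg (fun X => P 0 * X) key
  simp only [mul_zero, mul_add, ← mul_assoc, hleft, zero_mul, add_zero] at h2
  have h3 : P 0 * (d • (1 : Matrix (Fin N) (Fin N) ℝ) + A') * P 0 = 0 := by
    rw [mul_add]; exact h2
  have h4 : d • P 0 + P 0 * A' * P 0 = 0 := by
    have : P 0 * (d • (1 : Matrix (Fin N) (Fin N) ℝ) + A') * P 0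
        = d • (P 0 * P 0) + P 0 * A' * P 0 := by
      rw [mul_add, add_mul]
      simp [Matrix.mul_smul, Matrix.smul_mul]
    rw [this, hidem] at h3
    exact h3
  rw [neg_smul]
  exact eq_neg_of_add_eq_zero_right h4
end
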